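/- Let E be a vector lattice with the principal projection property, F a Dedekind complete vector lattice, Φ : 𝔅(E) → 𝔅(F) a Boolean homomorphism, T : E → F a positive orthogonally additive operator, and set R(T)(x) := inf { Σᵢ Φ(πᵢ)(T(πᵢ x)) : (πᵢ) ∈ 𝔇₀ }. Then R(T) is atomic subordinate to Φ (equivalently R(R(T)) = R(T)), and R(T) is the greatest atomic minorant of T: every positive orthogonally additive operator S : E → F that is atomic subordinate to Φ and satisfies S x ≤ T x for all x ∈ E also satisfies S x ≤ R(T)(x) for all x ∈ E. Thus R(T) is the component of T in the band of atomic operators subordinate to Φ. -/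

import Mathlib

namespace VL

/-- Two elements of a vector lattice are disjoint if `|x| ⊓ |y| = 0`. -/
def VDisjoint {G : Type*} [Lattice G] [AddCommGroup G] (x y : G) : Prop :=
  |x| ⊓ |y| = 0

/-- `y` is a fragment of `x` if `y ⊥ (x - y)`. -/
def Fragment {G : Type*} [Lattice G] [AddCommGroup G] (y x : G) : Prop :=
  VDisjoint y (x - y)

/-- An order projection: a linear idempotent `π` with `0 ≤ π x ≤ x` for all `x ≥ 0`. -/
def IsOrderProjection {G : Type*} [Lattice G] [AddCommGroup G] [Module ℝ G]
    (π : G →ₗ[ℝ] G) : Prop :=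
  (∀ x, π (π x) = π x) ∧ ∀ x : G, 0 ≤ x → 0 ≤ π x ∧ π x ≤ x

/-- A map between the order projections of `E` and of `F` is a Boolean homomorphism if it
maps order projections to order projections and preserves the Boolean operations
`π ∧ ρ = π ∘ ρ`, `π ∨ ρ = π + ρ - π ∘ ρ` and `compl π = Id - π`. -/
def IsBooleanHom {E F : Type*} [Lattice E] [AddCommGroup E] [Module ℝ E]
    [Lattice F] [AddCommGroup F] [Module ℝ F]
    (Φ : (E →ₗ[ℝ] E) → (F →ₗ[ℝ] F)) : Prop :=
  (∀ π, IsOrderProjection π → IsOrderProjection (Φ π)) ∧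
  (∀ π ρ, IsOrderProjection π → IsOrderProjection ρ →
    Φ (π ∘ₗ ρ) = Φ π ∘ₗ Φ ρ) ∧
  (∀ π ρ, IsOrderProjection π → IsOrderProjection ρ →
    Φ (π + ρ - π ∘ₗ ρ) = Φ π + Φ ρ - Φ π ∘ₗ Φ ρ) ∧
  (∀ π, IsOrderProjection π → Φ (LinearMap.id - π) = LinearMap.id - Φ π)

/-- `T` is atomic subordinate to `Φ` if `T (π x) = Φ(π) (T x)` for every order projection. -/
def IsAtomic {E F : Type*} [Lattice E] [AddCommGroup E] [Module ℝ E]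
    [Lattice F] [AddCommGroup F] [Module ℝ F]
    (Φ : (E →ₗ[ℝ] E) → (F →ₗ[ℝ] F)) (T : E → F) : Prop :=
  ∀ π : E →ₗ[ℝ] E, IsOrderProjection π → ∀ x : E, T (π x) = Φ π (T x)

/-- The principal projection property: for every `x` there is an order projection `π_x`
(the projection onto the band generated by `x`) such that `z - π_x z ⊥ x` for all `z`,
and `π_x z ⊥ w` whenever `w ⊥ x`. -/
def HasPPP (E : Type*) [Lattice E] [AddCommGroup E] [Module ℝ E] : Prop :=
  ∀ x : E, ∃ π : E →ₗ[ℝ] E, IsOrderProjection π ∧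
    (∀ z : E, VDisjoint (z - π z) x) ∧
    (∀ z w : E, VDisjoint w x → VDisjoint (π z) w)

/-- Dedekind completeness: every nonempty set bounded above has a supremum. -/
def DedekindComplete (F : Type*) [Lattice F] : Prop :=
  ∀ S : Set F, S.Nonempty → BddAbove S → ∃ b, IsLUB S b



section AuxG
set_option linter.unusedSectionVars false
set_option linter.unusedVariables false

variable {G : Type*} [Lattice G] [AddCommGroup G] [Module ℝ G]
  [CovariantClass G G (· + ·) (· ≤ ·)]

lemma IsOrderProjection.mono {q : G →ₗ[ℝ] G} (hq : IsOrderProjection q) :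
    Monotone q := fun x y h => by
  have h0 := (hq.2 (y - x) (sub_nonneg.2 h)).1
  rw [map_sub] at h0
  exact sub_nonneg.1 h0

lemma isOrderProjection_id' : IsOrderProjection (LinearMap.id : G →ₗ[ℝ] G) :=
  ⟨fun _ => rfl, fun x hx => ⟨hx, le_rfl⟩⟩

lemma isOrderProjection_zero' : IsOrderProjection (0 : G →ₗ[ℝ] G) :=
  ⟨fun _ => by simp, fun x hx => ⟨le_rfl, hx⟩⟩

lemma IsOrderProjection.compl {q : G →ₗ[ℝ] G} (hq : IsOrderProjection q) :
    IsOrderProjection (LinearMap.id - q) := by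
  refine ⟨fun x => ?_, fun x hx => ⟨?_, ?_⟩⟩
  · simp only [LinearMap.sub_apply, LinearMap.id_apply, map_sub, hq.1 x]
    abel
  · simp only [LinearMap.sub_apply, LinearMap.id_apply]
    exact sub_nonneg.2 (hq.2 x hx).2
  · simp only [LinearMap.sub_apply, LinearMap.id_apply]
    exact sub_le_self _ (hq.2 x hx).1

lemma op_compl_comp_apply {q : G →ₗ[ℝ] G} (hq : IsOrderProjection q) (x : G) :
    ((LinearMap.id - q : G →ₗ[ℝ] G)) (q x) = 0 := by
  simp only [LinearMap.sub_apply, LinearMap.id_apply, hq.1 x, sub_self]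

lemma op_comp_compl_apply {q : G →ₗ[ℝ] G} (hq : IsOrderProjection q) (x : G) :
    q (((LinearMap.id - q : G →ₗ[ℝ] G)) x) = 0 := by
  simp only [LinearMap.sub_apply, LinearMap.id_apply, map_sub, hq.1 x, sub_self]

lemma op_inf_compl_eq_zero {q : G →ₗ[ℝ] G} (hq : IsOrderProjection q)
    {u v : G} (hu : 0 ≤ u) (hv : 0 ≤ v) :
    q u ⊓ ((LinearMap.id - q : G →ₗ[ℝ] G)) v = 0 := by
  have hr : IsOrderProjection (LinearMap.id - q) := hq.compl
  set w := q u ⊓ ((LinearMap.id - q : G →ₗ[ℝ] G)) v with hw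
  have hw0 : 0 ≤ w := le_inf (hq.2 u hu).1 (hr.2 v hv).1
  have h1 : ((LinearMap.id - q : G →ₗ[ℝ] G)) w ≤ 0 := by
    have := hr.mono (inf_le_left : w ≤ q u)
    rwa [op_compl_comp_apply hq] at this
  have h2 : q w ≤ 0 := by
    have := hq.mono (inf_le_right : w ≤ ((LinearMap.id - q : G →ₗ[ℝ] G)) v)
    rwa [op_comp_compl_apply hq] at this
  have hsum : w = q w + ((LinearMap.id - q : G →ₗ[ℝ] G)) w := by
    simp only [LinearMap.sub_apply, LinearMap.id_apply]; abel
  have : w ≤ 0 := by rw [hsum]; simpa using add_nonpos h2 h1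
  exact le_antisymm this hw0

lemma op_abs_apply_le {q : G →ₗ[ℝ] G} (hq : IsOrderProjection q) (a : G) :
    |q a| ≤ q |a| := by
  have h1 : 0 ≤ q a⁺ := (hq.2 _ (posPart_nonneg a)).1
  have h2 : 0 ≤ q a⁻ := (hq.2 _ (negPart_nonneg a)).1
  have ha : q a = q a⁺ - q a⁻ := by rw [← map_sub, posPart_sub_negPart]
  have habs : q |a| = q a⁺ + q a⁻ := by rw [← map_add, posPart_add_negPart]
  refine sup_le ?_ ?_
  · rw [ha, habs]
    have : -q a⁻ ≤ q a⁻ := le_trans (neg_nonpos.2 h2) h2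
    calc q a⁺ - q a⁻ = q a⁺ + -q a⁻ := by abel
      _ ≤ q a⁺ + q a⁻ := add_le_add_right this _
  · rw [ha, habs]
    have : -q a⁺ ≤ q a⁺ := le_trans (neg_nonpos.2 h1) h1
    calc -(q a⁺ - q a⁻) = -q a⁺ + q a⁻ := by abel
      _ ≤ q a⁺ + q a⁻ := add_le_add_left this _

lemma op_disjoint_compl {q : G →ₗ[ℝ] G} (hq : IsOrderProjection q) (a b : G) :
    VDisjoint (q a) (((LinearMap.id - q : G →ₗ[ℝ] G)) b) := by
  unfold VDisjoint
  refine le_antisymm ?_ (le_inf (abs_nonneg _) (abs_nonneg _))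
  calc |q a| ⊓ |((LinearMap.id - q : G →ₗ[ℝ] G)) b| ≤
        q |a| ⊓ ((LinearMap.id - q : G →ₗ[ℝ] G)) |b| :=
        inf_le_inf (op_abs_apply_le hq a) (op_abs_apply_le hq.compl b)
    _ = 0 := op_inf_compl_eq_zero hq (abs_nonneg a) (abs_nonneg b)

lemma op_comp_apply_of_nonneg {p q : G →ₗ[ℝ] G} (hp : IsOrderProjection p)
    (hq : IsOrderProjection q) {x : G} (hx : 0 ≤ x) : q (p x) = q x ⊓ p x := by
  have hpx : 0 ≤ p x := (hp.2 x hx).1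
  apply le_antisymm
  · exact le_inf (hq.mono (hp.2 x hx).2) (hq.2 _ hpx).2
  · set y := q x ⊓ p x with hy
    have hy0 : 0 ≤ y := le_inf (hq.2 x hx).1 hpx
    have hyq : y = q y := by
      have h1 : ((LinearMap.id - q : G →ₗ[ℝ] G)) y ≤
          ((LinearMap.id - q : G →ₗ[ℝ] G)) (q x) := hq.compl.mono inf_le_left
      rw [op_compl_comp_apply hq] at h1
      have h3 : q y ≤ y := (hq.2 y hy0).2
      have h4 : y ≤ q y := by
        simp only [LinearMap.sub_apply, LinearMap.id_apply, sub_nonpos] at h1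
        exact h1
      exact le_antisymm h4 h3
    calc y = q y := hyq
      _ ≤ q (p x) := hq.mono inf_le_right

lemma op_comm {p q : G →ₗ[ℝ] G} (hp : IsOrderProjection p) (hq : IsOrderProjection q) :
    p ∘ₗ q = q ∘ₗ p := by
  ext x
  simp only [LinearMap.comp_apply]
  have key : ∀ z : G, 0 ≤ z → p (q z) = q (p z) := fun z hz => by
    rw [op_comp_apply_of_nonneg hq hp hz, op_comp_apply_of_nonneg hp hq hz, inf_comm]
  have e1 : p (q x) = p (q x⁺) - p (q x⁻) := by
    rw [← map_sub, ← map_sub, posPart_sub_negPart]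
  have e2 : q (p x) = q (p x⁺) - q (p x⁻) := by
    rw [← map_sub, ← map_sub, posPart_sub_negPart]
  rw [e1, e2, key _ (posPart_nonneg x), key _ (negPart_nonneg x)]

lemma IsOrderProjection.comp {p q : G →ₗ[ℝ] G} (hp : IsOrderProjection p)
    (hq : IsOrderProjection q) : IsOrderProjection (p ∘ₗ q) := by
  have hcomm := op_comm hp hq
  refine ⟨fun x => ?_, fun x hx => ?_⟩
  · have : q (p (q x)) = p (q (q x)) := by
      have := congrArg (fun f : G →ₗ[ℝ] G => f (q x)) hcomm.symm
      simpa using this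
    simp only [LinearMap.comp_apply, this, hq.1, hp.1]
  · have h1 := hq.2 x hx
    have h2 := hp.2 (q x) h1.1
    exact ⟨h2.1, le_trans h2.2 h1.2⟩

lemma op_isGLB {q : G →ₗ[ℝ] G} (hq : IsOrderProjection q) {S : Set G} {b : G}
    (hne : S.Nonempty) (h : IsGLB S b) : IsGLB (q '' S) (q b) := by
  constructor
  · rintro _ ⟨s, hs, rfl⟩
    exact hq.mono (h.1 hs)
  · intro c hc
    obtain ⟨s₀, hs₀⟩ := hne
    have hcs₀ : c ≤ q s₀ := hc ⟨s₀, hs₀, rfl⟩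
    have hcq : c ≤ q c := by
      have h1 : ((LinearMap.id - q : G →ₗ[ℝ] G)) c ≤
          ((LinearMap.id - q : G →ₗ[ℝ] G)) (q s₀) := hq.compl.mono hcs₀
      rw [op_compl_comp_apply hq] at h1
      simp only [LinearMap.sub_apply, LinearMap.id_apply, sub_nonpos] at h1
      exact h1
    have key : q c + ((LinearMap.id - q : G →ₗ[ℝ] G)) b ≤ b := by
      apply h.2
      intro s hs
      have hc1 : q c ≤ q s := by
        have := hq.mono (hc ⟨s, hs, rfl⟩)
        rwa [hq.1] at this
      have hc2 : ((LinearMap.id - q : G →ₗ[ℝ] G)) b ≤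
          ((LinearMap.id - q : G →ₗ[ℝ] G)) s := hq.compl.mono (h.1 hs)
      calc q c + ((LinearMap.id - q : G →ₗ[ℝ] G)) b
          ≤ q s + ((LinearMap.id - q : G →ₗ[ℝ] G)) s := add_le_add hc1 hc2
        _ = s := by simp only [LinearMap.sub_apply, LinearMap.id_apply]; abel
    have h5 : q c + ((LinearMap.id - q : G →ₗ[ℝ] G)) b ≤
        q b + ((LinearMap.id - q : G →ₗ[ℝ] G)) b := by
      calc q c + ((LinearMap.id - q : G →ₗ[ℝ] G)) b ≤ b := key
        _ = q b + ((LinearMap.id - q : G →ₗ[ℝ] G)) b := by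
            simp only [LinearMap.sub_apply, LinearMap.id_apply]; abel
    exact le_trans hcq (le_of_add_le_add_right h5)

lemma sum_nonneg'' {ι : Type*} (s : Finset ι) (f : ι → G) (h : ∀ i ∈ s, 0 ≤ f i) :
    0 ≤ ∑ i ∈ s, f i := by
  classical
  induction s using Finset.induction with
  | empty => simp
  | insert j s hj ih =>
    rw [Finset.sum_insert hj]
    exact add_nonneg (h j (Finset.mem_insert_self j s))
      (ih fun i hi => h i (Finset.mem_insert_of_mem hi))

lemma sum_le_sum_univ' {n : ℕ} (s : Finset (Fin n)) (f : Fin n → G)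
    (h : ∀ i, 0 ≤ f i) : ∑ i ∈ s, f i ≤ ∑ i, f i := by
  rw [← Finset.sum_sdiff (Finset.subset_univ s)]
  exact le_add_of_nonneg_left (sum_nonneg'' _ _ fun i _ => h i)

lemma sum_le_sum' {ι : Type*} (s : Finset ι) (f g : ι → G)
    (h : ∀ i ∈ s, f i ≤ g i) : ∑ i ∈ s, f i ≤ ∑ i ∈ s, g i := by
  have h0 : 0 ≤ ∑ i ∈ s, (g i - f i) := sum_nonneg'' _ _ fun i hi => sub_nonneg.2 (h i hi)
  rw [Finset.sum_sub_distrib] at h0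
  exact sub_nonneg.1 h0

lemma comp_rearrange {a b c d : G →ₗ[ℝ] G} (h : b ∘ₗ c = c ∘ₗ b) :
    (a ∘ₗ b) ∘ₗ (c ∘ₗ d) = (a ∘ₗ c) ∘ₗ (b ∘ₗ d) := by
  ext x
  simp only [LinearMap.comp_apply]
  have hx : b (c (d x)) = c (b (d x)) := by
    simpa using congrArg (fun f : G →ₗ[ℝ] G => f (d x)) h
  rw [hx]

end AuxG

variable {E F : Type*}
  [Lattice E] [AddCommGroup E] [Module ℝ E]
  [CovariantClass E E (· + ·) (· ≤ ·)] [PosSMulMono ℝ E]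
  [Lattice F] [AddCommGroup F] [Module ℝ F]
  [CovariantClass F F (· + ·) (· ≤ ·)] [PosSMulMono ℝ F]

/-- A finite partition of the identity: finitely many pairwise disjoint order projections
summing to the identity. -/
def IsPartitionOfIdentity {E : Type*} [Lattice E] [AddCommGroup E] [Module ℝ E]
    {n : ℕ} (π : Fin n → E →ₗ[ℝ] E) : Prop :=
  (∀ i, IsOrderProjection (π i)) ∧
  (∀ i j, i ≠ j → (π i) ∘ₗ (π j) = 0) ∧
  (∑ i, π i) = LinearMap.id

/-- The set `{ Σᵢ Φ(πᵢ)(T(πᵢ x)) : (πᵢ) ∈ 𝔇₀ }` of values at `x` of the operators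
associated to finite partitions of the identity. -/
def atomicSumSet (Φ : (E →ₗ[ℝ] E) → (F →ₗ[ℝ] F)) (T : E → F) (x : E) : Set F :=
  {w : F | ∃ (n : ℕ) (π : Fin n → E →ₗ[ℝ] E), IsPartitionOfIdentity π ∧
    w = ∑ i, Φ (π i) (T (π i x))}


set_option linter.unusedSectionVars false in
lemma partition_partialSum_proj {n : ℕ} {π : Fin n → E →ₗ[ℝ] E}
    (h : IsPartitionOfIdentity π) (s : Finset (Fin n)) :
    IsOrderProjection (∑ i ∈ s, π i) := by
  constructor
  · intro x
    simp only [LinearMap.sum_apply, map_sum]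
    refine Finset.sum_congr rfl fun j hj => ?_
    rw [Finset.sum_eq_single_of_mem j hj]
    · exact (h.1 j).1 x
    · intro i hi hij
      calc π i (π j x) = (π i ∘ₗ π j) x := rfl
        _ = 0 := by rw [h.2.1 i j hij]; rfl
  · intro x hx
    constructor
    · rw [LinearMap.sum_apply]
      exact sum_nonneg'' _ _ fun i _ => ((h.1 i).2 x hx).1
    · rw [LinearMap.sum_apply]
      calc ∑ i ∈ s, π i x ≤ ∑ i, π i x :=
            sum_le_sum_univ' s _ fun i => ((h.1 i).2 x hx).1
        _ = x := by rw [← LinearMap.sum_apply, h.2.2]; rfl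

set_option linter.unusedSectionVars false in
lemma partition_comp_partialSum_zero {n : ℕ} {π : Fin n → E →ₗ[ℝ] E}
    (h : IsPartitionOfIdentity π) {s : Finset (Fin n)} {j : Fin n} (hj : j ∉ s) :
    π j ∘ₗ (∑ i ∈ s, π i) = 0 := by
  ext x
  simp only [LinearMap.comp_apply, LinearMap.sum_apply, map_sum, LinearMap.zero_apply]
  refine Finset.sum_eq_zero fun i hi => ?_
  have hne : j ≠ i := fun hji => hj (hji ▸ hi)
  calc π j (π i x) = (π j ∘ₗ π i) x := rfl
    _ = 0 := by rw [h.2.1 j i hne]; rfl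

set_option linter.unusedSectionVars false in
lemma IsBooleanHom.map_zero' {Φ : (E →ₗ[ℝ] E) → (F →ₗ[ℝ] F)}
    (hΦ : IsBooleanHom Φ) : Φ 0 = 0 := by
  have hid : IsOrderProjection (LinearMap.id : E →ₗ[ℝ] E) := isOrderProjection_id'
  have h1 : Φ LinearMap.id = Φ LinearMap.id ∘ₗ Φ LinearMap.id := by
    have := hΦ.2.1 LinearMap.id LinearMap.id hid hid
    rwa [LinearMap.id_comp] at this
  have h2 : Φ 0 = LinearMap.id - Φ LinearMap.id := by
    have := hΦ.2.2.2 LinearMap.id hid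
    rwa [sub_self] at this
  have h3 : Φ 0 = Φ LinearMap.id ∘ₗ Φ 0 := by
    have := hΦ.2.1 LinearMap.id 0 hid isOrderProjection_zero'
    rwa [LinearMap.comp_zero] at this
  rw [h3, h2]
  ext x
  simp only [LinearMap.comp_apply, LinearMap.sub_apply, LinearMap.id_apply,
    LinearMap.zero_apply, map_sub]
  rw [← LinearMap.comp_apply (Φ LinearMap.id) (Φ LinearMap.id), ← h1]
  abel

set_option linter.unusedSectionVars false in
lemma IsBooleanHom.map_id' {Φ : (E →ₗ[ℝ] E) → (F →ₗ[ℝ] F)}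
    (hΦ : IsBooleanHom Φ) : Φ LinearMap.id = LinearMap.id := by
  have h2 : Φ 0 = LinearMap.id - Φ LinearMap.id := by
    have := hΦ.2.2.2 LinearMap.id isOrderProjection_id'
    rwa [sub_self] at this
  rw [hΦ.map_zero'] at h2
  have := congrArg (fun f => f + Φ (LinearMap.id : E →ₗ[ℝ] E)) h2
  simpa [sub_add_cancel] using this

set_option linter.unusedSectionVars false in
lemma IsBooleanHom.map_add_disjoint {Φ : (E →ₗ[ℝ] E) → (F →ₗ[ℝ] F)}
    (hΦ : IsBooleanHom Φ) {π ρ : E →ₗ[ℝ] E}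
    (hπ : IsOrderProjection π) (hρ : IsOrderProjection ρ) (h : π ∘ₗ ρ = 0) :
    Φ (π + ρ) = Φ π + Φ ρ := by
  have h1 := hΦ.2.2.1 π ρ hπ hρ
  have h2 : Φ π ∘ₗ Φ ρ = 0 := by rw [← hΦ.2.1 π ρ hπ hρ, h, hΦ.map_zero']
  rw [h, sub_zero] at h1
  rw [h1, h2, sub_zero]

set_option linter.unusedSectionVars false in
lemma IsBooleanHom.map_partition_sum {Φ : (E →ₗ[ℝ] E) → (F →ₗ[ℝ] F)}
    (hΦ : IsBooleanHom Φ) {n : ℕ} {π : Fin n → E →ₗ[ℝ] E}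
    (h : IsPartitionOfIdentity π) : (∑ i, Φ (π i)) = LinearMap.id := by
  classical
  have key : ∀ s : Finset (Fin n), Φ (∑ i ∈ s, π i) = ∑ i ∈ s, Φ (π i) := by
    intro s
    induction s using Finset.induction with
    | empty => simpa using hΦ.map_zero'
    | insert j s hj ih =>
      rw [Finset.sum_insert hj, Finset.sum_insert hj, ← ih,
        hΦ.map_add_disjoint (h.1 j) (partition_partialSum_proj h s)
          (partition_comp_partialSum_zero h hj)]
  have h2 := key Finset.univ
  rw [h.2.2, hΦ.map_id'] at h2
  exact h2.symm

set_option linter.unusedSectionVars false in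
lemma refined_partition {n : ℕ} {π : Fin n → E →ₗ[ℝ] E}
    (hpart : IsPartitionOfIdentity π) {p : E →ₗ[ℝ] E} (hp : IsOrderProjection p) :
    IsPartitionOfIdentity
      (Fin.append (fun i => p ∘ₗ π i)
        (fun i => ((LinearMap.id - p : E →ₗ[ℝ] E)) ∘ₗ π i)) := by
  have hp' : IsOrderProjection ((LinearMap.id - p : E →ₗ[ℝ] E)) := hp.compl
  have hpp' : p ∘ₗ ((LinearMap.id - p : E →ₗ[ℝ] E)) = 0 := by
    ext x; simpa using op_comp_compl_apply hp x
  have hp'p : ((LinearMap.id - p : E →ₗ[ℝ] E)) ∘ₗ p = 0 := by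
    ext x; simpa using op_compl_comp_apply hp x
  have hcomm : ∀ i, π i ∘ₗ p = p ∘ₗ π i := fun i => op_comm (hpart.1 i) hp
  have hcomm' : ∀ i, π i ∘ₗ ((LinearMap.id - p : E →ₗ[ℝ] E)) =
      ((LinearMap.id - p : E →ₗ[ℝ] E)) ∘ₗ π i := fun i => op_comm (hpart.1 i) hp'
  refine ⟨?_, ?_, ?_⟩
  · intro i
    induction i using Fin.addCases with
    | left i => rw [Fin.append_left]; exact hp.comp (hpart.1 i)
    | right i => rw [Fin.append_right]; exact hp'.comp (hpart.1 i)
  · intro i j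
    induction i using Fin.addCases with
    | left i =>
      induction j using Fin.addCases with
      | left j =>
        intro hij
        have hne : i ≠ j := fun hij' => hij (by rw [hij'])
        rw [Fin.append_left, Fin.append_left, comp_rearrange (hcomm i),
          hpart.2.1 i j hne, LinearMap.comp_zero]
      | right j =>
        intro _
        rw [Fin.append_left, Fin.append_right, comp_rearrange (hcomm' i),
          hpp', LinearMap.zero_comp]
    | right i =>
      induction j using Fin.addCases with
      | left j =>
        intro _
        rw [Fin.append_right, Fin.append_left, comp_rearrange (hcomm i),
          hp'p, LinearMap.zero_comp]
      | right j =>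
        intro hij
        have hne : i ≠ j := fun hij' => hij (by rw [hij'])
        rw [Fin.append_right, Fin.append_right, comp_rearrange (hcomm' i),
          hpart.2.1 i j hne, LinearMap.comp_zero]
  · rw [Fin.sum_univ_add]
    simp only [Fin.append_left, Fin.append_right]
    have e1 : (∑ i, p ∘ₗ π i) = p ∘ₗ ∑ i, π i := by
      ext x
      simp only [LinearMap.sum_apply, LinearMap.comp_apply, map_sum]
    have e2 : (∑ i, ((LinearMap.id - p : E →ₗ[ℝ] E)) ∘ₗ π i) =
        ((LinearMap.id - p : E →ₗ[ℝ] E)) ∘ₗ ∑ i, π i := by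
      ext x
      simp only [LinearMap.sum_apply, LinearMap.comp_apply, map_sum]
    rw [e1, e2, hpart.2.2, LinearMap.comp_id, LinearMap.comp_id]
    ext x
    simp only [LinearMap.add_apply, LinearMap.sub_apply, LinearMap.id_apply]
    abel

/-- `R(T)` is atomic subordinate to `Φ` and is the greatest atomic minorant
of `T`; it is the component of `T` in the band of atomic operators. -/
theorem atomic_projection_is_component
    (hE : HasPPP E) (hF : DedekindComplete F)
    (Φ : (E →ₗ[ℝ] E) → (F →ₗ[ℝ] F)) (hΦ : IsBooleanHom Φ)
    (T : E → F) (hTpos : ∀ x : E, 0 ≤ T x)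
    (hToa : ∀ x y : E, VDisjoint x y → T (x + y) = T x + T y)
    (R : E → F) (hR : ∀ x : E, IsGLB (atomicSumSet Φ T x) (R x)) :
    IsAtomic Φ R ∧
    ∀ S : E → F, (∀ x : E, 0 ≤ S x) →
      (∀ x y : E, VDisjoint x y → S (x + y) = S x + S y) →
      IsAtomic Φ S → (∀ x : E, S x ≤ T x) → ∀ x : E, S x ≤ R x := by
  classical
  have hT0 : T 0 = 0 := by
    have h := hToa 0 0 (by simp [VDisjoint])
    rw [add_zero] at h
    exact (left_eq_add.mp h)
  have hsetne : ∀ y : E, (atomicSumSet Φ T y).Nonempty := by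
    intro y
    refine ⟨Φ LinearMap.id (T y), 1, fun _ => LinearMap.id, ⟨fun _ => isOrderProjection_id',
      fun i j hij => absurd (Subsingleton.elim i j) hij, by simp⟩, ?_⟩
    simp
  constructor
  · -- IsAtomic Φ R
    intro p hp x
    have hp' : IsOrderProjection ((LinearMap.id - p : E →ₗ[ℝ] E)) := hp.compl
    have hΦp : IsOrderProjection (Φ p) := hΦ.1 p hp
    apply le_antisymm
    · -- R (p x) ≤ Φ p (R x)
      have hglb : IsGLB ((Φ p) '' atomicSumSet Φ T x) (Φ p (R x)) :=
        op_isGLB hΦp (hsetne x) (hR x)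
      refine hglb.2 ?_
      rintro _ ⟨v, ⟨n, π, hpart, rfl⟩, rfl⟩
      have hpart' := refined_partition hpart hp
      have hcomm : ∀ i, π i ∘ₗ p = p ∘ₗ π i := fun i => op_comm (hpart.1 i) hp
      have c1 : ∀ i, (p ∘ₗ π i) (p x) = p (π i x) := by
        intro i
        have h1 : π i (p x) = p (π i x) := by
          simpa using congrArg (fun f : E →ₗ[ℝ] E => f x) (hcomm i)
        simp only [LinearMap.comp_apply, h1, hp.1]
      have c2 : ∀ i, (((LinearMap.id - p : E →ₗ[ℝ] E)) ∘ₗ π i) (p x) = 0 := by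
        intro i
        have h1 : π i (p x) = p (π i x) := by
          simpa using congrArg (fun f : E →ₗ[ℝ] E => f x) (hcomm i)
        simp only [LinearMap.comp_apply, h1]
        exact op_compl_comp_apply hp (π i x)
      set w := ∑ i : Fin n, Φ (p ∘ₗ π i) (T (p (π i x))) with hwdef
      have hwmem : w ∈ atomicSumSet Φ T (p x) := by
        refine ⟨n + n, _, hpart', ?_⟩
        rw [Fin.sum_univ_add]
        simp only [Fin.append_left, Fin.append_right]
        have hz : ∀ i : Fin n,
            Φ (((LinearMap.id - p : E →ₗ[ℝ] E)) ∘ₗ π i)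
              (T ((((LinearMap.id - p : E →ₗ[ℝ] E)) ∘ₗ π i) (p x))) = 0 := by
          intro i
          rw [c2 i, hT0, map_zero]
        rw [Finset.sum_congr rfl fun i _ => hz i]
        simp only [Finset.sum_const_zero, add_zero, hwdef]
        refine Finset.sum_congr rfl fun i _ => ?_
        rw [c1 i]
      have hRw : R (p x) ≤ w := (hR (p x)).1 hwmem
      have hwv : w ≤ Φ p (∑ i, Φ (π i) (T (π i x))) := by
        rw [map_sum]
        refine sum_le_sum' _ _ _ fun i _ => ?_
        have hproj : IsOrderProjection (p ∘ₗ π i) := hp.comp (hpart.1 i)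
        have hdec : π i x = p (π i x) + ((LinearMap.id - p : E →ₗ[ℝ] E)) (π i x) := by
          simp only [LinearMap.sub_apply, LinearMap.id_apply]; abel
        have hsplit : T (π i x) = T (p (π i x)) +
            T (((LinearMap.id - p : E →ₗ[ℝ] E)) (π i x)) := by
          conv_lhs => rw [hdec]
          exact hToa _ _ (op_disjoint_compl hp (π i x) (π i x))
        have hle : T (p (π i x)) ≤ T (π i x) := by
          rw [hsplit]
          exact le_add_of_nonneg_right (hTpos _)
        have hmono : Φ (p ∘ₗ π i) (T (p (π i x))) ≤ Φ (p ∘ₗ π i) (T (π i x)) :=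
          (hΦ.1 _ hproj).mono hle
        have heq : Φ (p ∘ₗ π i) (T (π i x)) = Φ p (Φ (π i) (T (π i x))) := by
          have := hΦ.2.1 p (π i) hp (hpart.1 i)
          simpa using congrArg (fun f : F →ₗ[ℝ] F => f (T (π i x))) this
        rw [← heq]
        exact hmono
      exact le_trans hRw hwv
    · -- Φ p (R x) ≤ R (p x)
      refine (hR (p x)).2 ?_
      rintro u ⟨n, π, hpart, rfl⟩
      have hpart' := refined_partition hpart hp
      have hcomm : ∀ i, π i ∘ₗ p = p ∘ₗ π i := fun i => op_comm (hpart.1 i) hp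
      have hpp' : p ∘ₗ ((LinearMap.id - p : E →ₗ[ℝ] E)) = 0 := by
        ext z; simpa using op_comp_compl_apply hp z
      set v := ∑ i : Fin (n + n),
        Φ (Fin.append (fun i => p ∘ₗ π i)
            (fun i => ((LinearMap.id - p : E →ₗ[ℝ] E)) ∘ₗ π i) i)
          (T ((Fin.append (fun i => p ∘ₗ π i)
            (fun i => ((LinearMap.id - p : E →ₗ[ℝ] E)) ∘ₗ π i) i) x)) with hvdef
      have hvmem : v ∈ atomicSumSet Φ T x := ⟨n + n, _, hpart', rfl⟩
      have hRv : Φ p (R x) ≤ Φ p v := hΦp.mono ((hR x).1 hvmem)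
      have hvu : Φ p v ≤ ∑ i, Φ (π i) (T (π i (p x))) := by
        have hvsplit : Φ p v = ∑ i : Fin n, Φ (p ∘ₗ π i) (T ((p ∘ₗ π i) x)) := by
          rw [hvdef, map_sum, Fin.sum_univ_add]
          simp only [Fin.append_left, Fin.append_right]
          have eL : ∀ i : Fin n, Φ p (Φ (p ∘ₗ π i) (T ((p ∘ₗ π i) x))) =
              Φ (p ∘ₗ π i) (T ((p ∘ₗ π i) x)) := by
            intro i
            have hcomp : p ∘ₗ (p ∘ₗ π i) = p ∘ₗ π i := by
              rw [← LinearMap.comp_assoc]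
              congr 1
              ext z; simp [hp.1]
            have := hΦ.2.1 p (p ∘ₗ π i) hp (hp.comp (hpart.1 i))
            rw [hcomp] at this
            simpa using (congrArg (fun f : F →ₗ[ℝ] F =>
              f (T ((p ∘ₗ π i) x))) this).symm
          have eR : ∀ i : Fin n,
              Φ p (Φ (((LinearMap.id - p : E →ₗ[ℝ] E)) ∘ₗ π i)
                (T ((((LinearMap.id - p : E →ₗ[ℝ] E)) ∘ₗ π i) x))) = 0 := by
            intro i
            have hcomp : p ∘ₗ (((LinearMap.id - p : E →ₗ[ℝ] E)) ∘ₗ π i) = 0 := by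
              rw [← LinearMap.comp_assoc, hpp', LinearMap.zero_comp]
            have := hΦ.2.1 p (((LinearMap.id - p : E →ₗ[ℝ] E)) ∘ₗ π i) hp
              (hp.compl.comp (hpart.1 i))
            rw [hcomp, hΦ.map_zero'] at this
            have happ := congrArg (fun f : F →ₗ[ℝ] F =>
              f (T ((((LinearMap.id - p : E →ₗ[ℝ] E)) ∘ₗ π i) x))) this
            simpa using happ.symm
          rw [Finset.sum_congr rfl fun i _ => eL i,
            Finset.sum_congr rfl fun i _ => eR i]
          simp
        rw [hvsplit]
        refine sum_le_sum' _ _ _ fun i _ => ?_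
        have hdecomp : π i = (p ∘ₗ π i) + (((LinearMap.id - p : E →ₗ[ℝ] E)) ∘ₗ π i) := by
          ext z
          simp only [LinearMap.add_apply, LinearMap.comp_apply, LinearMap.sub_apply,
            LinearMap.id_apply]
          abel
        have hdisj : (p ∘ₗ π i) ∘ₗ (((LinearMap.id - p : E →ₗ[ℝ] E)) ∘ₗ π i) = 0 := by
          rw [comp_rearrange (op_comm (hpart.1 i) hp.compl), hpp', LinearMap.zero_comp]
        have hΦadd : Φ (π i) = Φ (p ∘ₗ π i) + Φ (((LinearMap.id - p : E →ₗ[ℝ] E)) ∘ₗ π i) := by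
          conv_lhs => rw [hdecomp]
          exact hΦ.map_add_disjoint (hp.comp (hpart.1 i)) (hp.compl.comp (hpart.1 i)) hdisj
        have harg : π i (p x) = (p ∘ₗ π i) x := by
          simpa using congrArg (fun f : E →ₗ[ℝ] E => f x) (hcomm i)
        rw [harg, hΦadd]
        simp only [LinearMap.add_apply]
        exact le_add_of_nonneg_right
          (((hΦ.1 _ (hp.compl.comp (hpart.1 i))).2 _ (hTpos _)).1)
      exact le_trans hRv hvu
  · -- greatest atomic minorant
    intro S hSpos hSoa hSatomic hSle x
    refine (hR x).2 ?_
    rintro w ⟨n, π, hpart, rfl⟩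
    have key : ∀ i : Fin n, Φ (π i) (S x) ≤ Φ (π i) (T (π i x)) := by
      intro i
      have h1 : S (π i x) = Φ (π i) (S x) := hSatomic (π i) (hpart.1 i) x
      have h2 : S (π i (π i x)) = Φ (π i) (S (π i x)) := hSatomic (π i) (hpart.1 i) (π i x)
      rw [(hpart.1 i).1 x] at h2
      rw [← h1, h2]
      exact (hΦ.1 _ (hpart.1 i)).mono (hSle (π i x))
    calc S x = (∑ i, Φ (π i)) (S x) := by rw [hΦ.map_partition_sum hpart]; rfl
      _ = ∑ i, Φ (π i) (S x) := by rw [LinearMap.sum_apply]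
      _ ≤ ∑ i, Φ (π i) (T (π i x)) := sum_le_sum' _ _ _ fun i _ => key i


end VL
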